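/- Let A be an ℕ-graded commutative ring, and let f, g ∈ π be homogeneous elements of degree 1 (f, g ∈ A_1). Then the image of g/f in the ring A[f⁻¹]_0 becomes invertible after applying the canonical map A[f⁻¹]_0 → A[(fg)⁻¹]_0, and the induced map (A[f⁻¹]_0)[(g/f)⁻¹] → A[(fg)⁻¹]_0 from the universal property of localization of (ungraded) commutative rings is an isomorphism; moreover this isomorphism identifies D₊(fg) ⊆ Proj A with the basic open subset D(g/f) of Spec A[f⁻¹]_0. -/

import Mathlib

open AlgebraicGeometry HomogeneousLocalization

section aux
variable {A : Type*} [CommRing A] {𝒜 : ℕ → Submodule ℤ A} [GradedAlgebra 𝒜]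

omit [GradedAlgebra 𝒜] in
lemma stmt19_rep {x : A} (z : HomogeneousLocalization.Away 𝒜 x) :
    ∃ (n k : ℕ) (c : A) (hc : c ∈ 𝒜 n) (hk : x ^ k ∈ 𝒜 n),
      z = HomogeneousLocalization.mk ⟨n, ⟨c, hc⟩, ⟨x ^ k, hk⟩, (Submonoid.mem_powers_iff _ _).mpr ⟨k, rfl⟩⟩ := by
  obtain ⟨c, rfl⟩ := mk_surjective z
  obtain ⟨k, hk⟩ := c.den_mem
  have hk' : x ^ k = (c.den : A) := hk
  refine ⟨c.deg, k, c.num, c.num.2, by rw [hk']; exact c.den.2, ?_⟩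
  apply val_injective
  rw [val_mk, val_mk]
  congr 1
  exact Subtype.ext hk'.symm
end aux

/-- for an ℕ-graded commutative ring `A` and `f, g ∈ A₁`, the image of `g/f` under
the canonical map `A[f⁻¹]₀ → A[(fg)⁻¹]₀` is invertible, the induced map
`(A[f⁻¹]₀)[(g/f)⁻¹] → A[(fg)⁻¹]₀` from the universal property of localization is an
isomorphism, and under the standard homeomorphism `D₊(f) ≅ Spec A[f⁻¹]₀` the open subset
`D₊(fg)` corresponds to the basic open subset `D(g/f)`. -/
theorem stmt19 {A : Type*} [CommRing A] (𝒜 : ℕ → Submodule ℤ A) [GradedAlgebra 𝒜]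
    (f g : A) (hf : f ∈ 𝒜 1) (hg : g ∈ 𝒜 1)
    (t : HomogeneousLocalization.Away 𝒜 f)
    (ht : t = HomogeneousLocalization.mk ⟨1, ⟨g, hg⟩, ⟨f, hf⟩, Submonoid.mem_powers f⟩) :
    IsUnit (HomogeneousLocalization.awayMap 𝒜 hg (rfl : f * g = f * g) t) ∧
    (∀ h : IsUnit (HomogeneousLocalization.awayMap 𝒜 hg (rfl : f * g = f * g) t),
      Function.Bijective
        (Localization.awayLift (HomogeneousLocalization.awayMap 𝒜 hg (rfl : f * g = f * g)) t h)) ∧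
    (ProjIsoSpecTopComponent.toSpec 𝒜 f ⁻¹'
        (PrimeSpectrum.basicOpen t : Set (PrimeSpectrum (HomogeneousLocalization.Away 𝒜 f)))
      = Subtype.val ⁻¹' (ProjectiveSpectrum.basicOpen 𝒜 (f * g) : Set (ProjectiveSpectrum 𝒜))) := by
  have hf1 : ∀ m : ℕ, f ^ m ∈ 𝒜 m := fun m => by simpa using SetLike.pow_mem_graded m hf
  have hfg : f * g ∈ 𝒜 2 := by simpa using SetLike.mul_mem_graded hf hg
  have ht' : t = HomogeneousLocalization.mk ⟨1, ⟨g, hg⟩, ⟨f ^ 1, by simpa using hf⟩, (Submonoid.mem_powers_iff _ _).mpr ⟨1, rfl⟩⟩ := by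
    rw [ht]
    apply val_injective
    rw [val_mk, val_mk]
    congr 1
    exact Subtype.ext (pow_one f).symm
  have hFt : (HomogeneousLocalization.awayMap 𝒜 hg (rfl : f * g = f * g) t).val =
      Localization.mk (g * g ^ 1) ⟨(f * g) ^ 1,
        (Submonoid.mem_powers_iff _ _).mpr ⟨1, rfl⟩⟩ := by
    rw [ht']; exact val_awayMap_mk 𝒜 hg rfl 1 ⟨g, hg⟩ 1 _
  have hunit : IsUnit (HomogeneousLocalization.awayMap 𝒜 hg (rfl : f * g = f * g) t) := by
    refine IsUnit.of_mul_eq_one (HomogeneousLocalization.mk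
      ⟨2, ⟨f * f, SetLike.mul_mem_graded hf hf⟩, ⟨(f * g) ^ 1, by simpa using hfg⟩, (Submonoid.mem_powers_iff _ _).mpr ⟨1, rfl⟩⟩) ?_
    apply val_injective
    rw [val_mul, hFt, val_mk, val_one, Localization.mk_mul,
      show (g * g ^ 1) * (f * f) = ((f * g) ^ 1 * (f * g) ^ 1 : A) by ring,
      ← Localization.mk_one, Localization.mk_eq_mk_iff, Localization.r_iff_exists]
    refine ⟨1, ?_⟩
    simp only [Submonoid.coe_mul, OneMemClass.coe_one]
    ring
  refine ⟨hunit, ?_, ?_⟩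
  · intro h
    letI : Algebra (HomogeneousLocalization.Away 𝒜 f) (HomogeneousLocalization.Away 𝒜 (f * g)) :=
      (HomogeneousLocalization.awayMap 𝒜 hg (rfl : f * g = f * g)).toAlgebra
    haveI : IsLocalization (Submonoid.powers t) (HomogeneousLocalization.Away 𝒜 (f * g)) := by
      refine ⟨?_, ?_, ?_⟩
      · rintro ⟨y, m, rfl⟩
        show IsUnit (algebraMap _ _ (t ^ m))
        rw [RingHom.algebraMap_toAlgebra, map_pow]
        exact hunit.pow m
      · intro z
        obtain ⟨n, k, c, hc, hk, rfl⟩ := stmt19_rep z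
        by_cases h0 : (f * g) ^ k = 0
        · haveI := HomogeneousLocalization.subsingleton 𝒜
            (x := Submonoid.powers (f * g)) ⟨k, h0⟩
          exact ⟨(0, 1), Subsingleton.elim _ _⟩
        · have hn : n = k • 2 :=
            DirectSum.degree_eq_of_mem_mem 𝒜 hk (SetLike.pow_mem_graded k hfg) h0
          subst hn
          refine ⟨(HomogeneousLocalization.mk ⟨k • 2, ⟨c, hc⟩,
            ⟨f ^ (2 * k), by simpa [smul_eq_mul, mul_comm] using hf1 (2 * k)⟩,
            (Submonoid.mem_powers_iff _ _).mpr ⟨2 * k, rfl⟩⟩, ⟨t ^ k, ⟨k, rfl⟩⟩), ?_⟩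
          apply val_injective
          show (_ * (HomogeneousLocalization.awayMap 𝒜 hg (rfl : f * g = f * g) (t ^ k))).val =
            (HomogeneousLocalization.awayMap 𝒜 hg (rfl : f * g = f * g) _).val
          rw [map_pow, val_mul, val_pow, hFt, val_mk, val_awayMap_mk, Localization.mk_pow,
            Localization.mk_mul, Localization.mk_eq_mk_iff, Localization.r_iff_exists]
          refine ⟨1, ?_⟩
          simp only [Submonoid.coe_mul, OneMemClass.coe_one, SubmonoidClass.coe_pow]
          ring
      · intro a b e
        obtain ⟨n₁, k₁, c₁, hc₁, hk₁, rfl⟩ := stmt19_rep a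
        obtain ⟨n₂, k₂, c₂, hc₂, hk₂, rfl⟩ := stmt19_rep b
        rw [RingHom.algebraMap_toAlgebra] at e
        have e' := congrArg HomogeneousLocalization.val e
        rw [val_awayMap_mk, val_awayMap_mk, Localization.mk_eq_mk_iff,
          Localization.r_iff_exists] at e'
        obtain ⟨⟨u, N, rfl⟩, hu⟩ := e'
        refine ⟨⟨t ^ (N + k₁ + k₂), ⟨N + k₁ + k₂, rfl⟩⟩, ?_⟩
        apply val_injective
        rw [val_mul, val_mul, val_pow, ht', val_mk, val_mk, val_mk, Localization.mk_pow,
          Localization.mk_mul, Localization.mk_mul, Localization.mk_eq_mk_iff,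
          Localization.r_iff_exists]
        refine ⟨1, ?_⟩
        simp only [Submonoid.coe_mul, OneMemClass.coe_one, SubmonoidClass.coe_pow] at hu ⊢
        simp only [mul_pow, pow_add, pow_one] at hu ⊢
        linear_combination f ^ (k₁ + k₂) * hu
    exact IsLocalization.bijective (Submonoid.powers t) _
      ((IsLocalization.Away.lift_comp t h).trans
        (RingHom.algebraMap_toAlgebra
          (HomogeneousLocalization.awayMap 𝒜 hg (rfl : f * g = f * g))).symm)
  · rw [ht, ProjIsoSpecTopComponent.toSpec_preimage_basicOpen]
    ext x
    simp only [Set.mem_preimage, SetLike.mem_coe, ProjectiveSpectrum.mem_basicOpen]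
    have hfx : f ∉ x.1.asHomogeneousIdeal :=
      (ProjectiveSpectrum.mem_basicOpen 𝒜 f x.1).mp x.2
    constructor
    · intro hgx hmul
      rcases x.1.isPrime.mem_or_mem hmul with h | h
      · exact hfx h
      · exact hgx h
    · intro hmul hgx
      exact hmul (Ideal.mul_mem_left _ f hgx)
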